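/- Define Φ : [0,∞) × ℝ → ℝ by Φ(t,ρ) = −t/2 + log(1 + e^{ρ+t}) if ρ ≤ −t; Φ(t,ρ) = ρ/2 + log 2 if −t ≤ ρ ≤ t; and Φ(t,ρ) = t/2 + log(1 + e^{ρ−t}) if ρ ≥ t. Then Φ is convex on [0,∞) × ℝ; moreover, at every point (t,ρ) with t > 0 and ρ ∉ {−t, t}, Φ is twice differentiable and the determinant of its 2×2 Hessian vanishes: ∂²Φ/∂t² · ∂²Φ/∂ρ² − (∂²Φ/∂t∂ρ)² = 0. -/

import Mathlib

/-- The explicit toric geodesic ray on `ℂP¹`: `Φ(t,ρ) = −t/2 + log(1+e^{ρ+t})` for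
`ρ ≤ −t`, `Φ(t,ρ) = ρ/2 + log 2` for `−t ≤ ρ ≤ t`, and
`Φ(t,ρ) = t/2 + log(1+e^{ρ−t})` for `ρ ≥ t`. -/
noncomputable def PhiRay (p : ℝ × ℝ) : ℝ :=
  if p.2 ≤ -p.1 then -p.1 / 2 + Real.log (1 + Real.exp (p.2 + p.1))
  else if p.2 ≤ p.1 then p.2 / 2 + Real.log 2
  else p.1 / 2 + Real.log (1 + Real.exp (p.2 - p.1))

/-! ### Auxiliary analytic lemmas -/

noncomputable def sigm (x : ℝ) : ℝ := Real.exp x / (1 + Real.exp x)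

lemma one_add_exp_pos (x : ℝ) : (0 : ℝ) < 1 + Real.exp x := by positivity

lemma one_add_exp_ne (x : ℝ) : (1 : ℝ) + Real.exp x ≠ 0 := (one_add_exp_pos x).ne'

lemma hasDerivAt_L (x : ℝ) :
    HasDerivAt (fun y : ℝ => Real.log (1 + Real.exp y)) (sigm x) x := by
  have h : HasDerivAt (fun y : ℝ => 1 + Real.exp y) (Real.exp x) x :=
    (Real.hasDerivAt_exp x).const_add 1
  simpa [sigm] using h.log (one_add_exp_ne x)

lemma hasDerivAt_sigm (x : ℝ) :
    HasDerivAt sigm (Real.exp x / (1 + Real.exp x) ^ 2) x := by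
  have h : HasDerivAt (fun y => Real.exp y / (1 + Real.exp y))
      ((Real.exp x * (1 + Real.exp x) - Real.exp x * Real.exp x) / (1 + Real.exp x) ^ 2) x :=
    (Real.hasDerivAt_exp x).div ((Real.hasDerivAt_exp x).const_add 1) (one_add_exp_ne x)
  exact h.congr_deriv (by ring)

noncomputable def gfun (x : ℝ) : ℝ := Real.log (1 + Real.exp x) - x / 2

lemma hasDerivAt_gfun (x : ℝ) : HasDerivAt gfun (sigm x - 1 / 2) x := by
  unfold gfun
  exact (hasDerivAt_L x).sub ((hasDerivAt_id x).div_const 2)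

lemma deriv_gfun : deriv gfun = fun x => sigm x - 1 / 2 :=
  funext fun x => (hasDerivAt_gfun x).deriv

lemma gfun_convex : ConvexOn ℝ Set.univ gfun := by
  refine convexOn_of_deriv2_nonneg convex_univ
    (fun x _ => (hasDerivAt_gfun x).differentiableAt.continuousAt.continuousWithinAt)
    (fun x _ => (hasDerivAt_gfun x).differentiableAt.differentiableWithinAt) ?_ ?_
  · rw [deriv_gfun]
    exact fun x _ =>
      ((hasDerivAt_sigm x).sub_const (1 / 2)).differentiableAt.differentiableWithinAt
  · intro x _
    have h2 : deriv^[2] gfun x = deriv (deriv gfun) x := rfl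
    rw [h2, deriv_gfun, ((hasDerivAt_sigm x).sub_const (1 / 2)).deriv]
    positivity

lemma gfun_mono : MonotoneOn gfun (Set.Ici 0) := by
  refine monotoneOn_of_deriv_nonneg (convex_Ici 0)
    (fun x _ => (hasDerivAt_gfun x).differentiableAt.continuousAt.continuousWithinAt)
    (fun x _ => (hasDerivAt_gfun x).differentiableAt.differentiableWithinAt) ?_
  intro x hx
  rw [interior_Ici] at hx
  rw [deriv_gfun]
  have h1 : (1 : ℝ) ≤ Real.exp x := Real.one_le_exp hx.le
  have h2 : (1 : ℝ) / 2 ≤ sigm x := by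
    rw [sigm, le_div_iff₀ (one_add_exp_pos x)]
    linarith
  linarith

lemma log_one_add_exp_neg (y : ℝ) :
    Real.log (1 + Real.exp (-y)) = Real.log (1 + Real.exp y) - y := by
  have h : (1 : ℝ) + Real.exp (-y) = (1 + Real.exp y) * Real.exp (-y) := by
    rw [add_mul, one_mul, ← Real.exp_add]
    have : y + -y = 0 := by ring
    rw [this, Real.exp_zero]
    ring
  rw [h, Real.log_mul (one_add_exp_ne y) (Real.exp_ne_zero _), Real.log_exp]
  ring

/-! ### The corner function -/

noncomputable def hcorner (p : ℝ × ℝ) : ℝ := max (p.2 - p.1) (max (-p.2 - p.1) 0)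

lemma hcorner_nonneg (p : ℝ × ℝ) : 0 ≤ hcorner p :=
  le_trans (le_max_right _ _) (le_max_right _ _)

lemma hcorner_le₁ (p : ℝ × ℝ) : p.2 - p.1 ≤ hcorner p := le_max_left _ _

lemma hcorner_le₂ (p : ℝ × ℝ) : -p.2 - p.1 ≤ hcorner p :=
  le_trans (le_max_left _ _) (le_max_right _ _)

lemma hcorner_combo {p q : ℝ × ℝ} {a b : ℝ} (ha : 0 ≤ a) (hb : 0 ≤ b) :
    hcorner (a • p + b • q) ≤ a * hcorner p + b * hcorner q := by
  have h1p := mul_le_mul_of_nonneg_left (hcorner_le₁ p) ha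
  have h1q := mul_le_mul_of_nonneg_left (hcorner_le₁ q) hb
  have h2p := mul_le_mul_of_nonneg_left (hcorner_le₂ p) ha
  have h2q := mul_le_mul_of_nonneg_left (hcorner_le₂ q) hb
  have h3p := mul_nonneg ha (hcorner_nonneg p)
  have h3q := mul_nonneg hb (hcorner_nonneg q)
  simp only [hcorner] at h1p h1q h2p h2q h3p h3q
  simp only [hcorner, Prod.fst_add, Prod.snd_add, Prod.smul_fst, Prod.smul_snd, smul_eq_mul]
  refine max_le (by nlinarith) (max_le (by nlinarith) (by linarith))

lemma phiRay_eq (p : ℝ × ℝ) (hp : 0 ≤ p.1) :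
    PhiRay p = p.2 / 2 + gfun (hcorner p) := by
  unfold PhiRay hcorner gfun
  split_ifs with h1 h2
  · rw [max_eq_left (show (0 : ℝ) ≤ -p.2 - p.1 by linarith),
      max_eq_right (show p.2 - p.1 ≤ -p.2 - p.1 by linarith)]
    have e1 : -p.2 - p.1 = -(p.2 + p.1) := by ring
    rw [e1, log_one_add_exp_neg]
    ring
  · push_neg at h1
    rw [max_eq_right (show -p.2 - p.1 ≤ (0 : ℝ) by linarith),
      max_eq_right (show p.2 - p.1 ≤ (0 : ℝ) by linarith)]
    norm_num
  · push_neg at h1 h2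
    rw [max_eq_right (show -p.2 - p.1 ≤ (0 : ℝ) by linarith),
      max_eq_left (show (0 : ℝ) ≤ p.2 - p.1 by linarith)]
    ring

/-! ### Slice lemmas -/

lemma slice_fst {U : Set (ℝ × ℝ)} (hU : IsOpen U) {t ρ : ℝ} (hmem : (t, ρ) ∈ U)
    {F : ℝ × ℝ → ℝ} (hval : Set.EqOn PhiRay F U) :
    (fun s => PhiRay (s, ρ)) =ᶠ[nhds t] (fun s => F (s, ρ)) :=
  (Filter.eventuallyEq_of_mem (hU.mem_nhds hmem) hval).comp_tendsto
    ((continuous_id.prodMk continuous_const).tendsto t)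

lemma slice_snd {U : Set (ℝ × ℝ)} (hU : IsOpen U) {t ρ : ℝ} (hmem : (t, ρ) ∈ U)
    {F : ℝ × ℝ → ℝ} (hval : Set.EqOn PhiRay F U) :
    (fun r => PhiRay (t, r)) =ᶠ[nhds ρ] (fun r => F (t, r)) :=
  (Filter.eventuallyEq_of_mem (hU.mem_nhds hmem) hval).comp_tendsto
    ((continuous_const.prodMk continuous_id).tendsto ρ)

lemma slice_mixed {U : Set (ℝ × ℝ)} (hU : IsOpen U) {t ρ : ℝ} (hmem : (t, ρ) ∈ U)
    {F : ℝ × ℝ → ℝ} (hval : Set.EqOn PhiRay F U) :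
    (fun s => deriv (fun r => PhiRay (s, r)) ρ) =ᶠ[nhds t]
      (fun s => deriv (fun r => F (s, r)) ρ) := by
  have h1 : ∀ᶠ s in nhds t, (s, ρ) ∈ U :=
    ((continuous_id.prodMk continuous_const).tendsto t).eventually
      (hU.eventually_mem hmem)
  refine h1.mono fun s hs => ?_
  have hV : IsOpen {r : ℝ | (s, r) ∈ U} := hU.preimage (continuous_const.prodMk continuous_id)
  have h2 : (fun r => PhiRay (s, r)) =ᶠ[nhds ρ] (fun r => F (s, r)) :=
    Filter.eventuallyEq_of_mem (hV.mem_nhds hs) fun r hr => hval hr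
  exact h2.deriv_eq

/-- `Φ` is convex on `[0,∞) × ℝ` and, at every point `(t,ρ)` with `t > 0` and
`ρ ∉ {−t, t}`, it is twice differentiable with vanishing Hessian determinant:
`Φ_tt Φ_ρρ − Φ_tρ² = 0`, i.e. `Φ` solves the homogeneous real Monge–Ampère equation
away from the corner locus `ρ = ±t`. -/
theorem PhiRay_convex_and_degenerate_hessian :
    ConvexOn ℝ (Set.Ici (0 : ℝ) ×ˢ (Set.univ : Set ℝ)) PhiRay ∧
    ∀ t ρ : ℝ, 0 < t → ρ ≠ -t → ρ ≠ t →
      ContDiffAt ℝ 2 PhiRay (t, ρ) ∧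
      deriv (deriv (fun s => PhiRay (s, ρ))) t *
          deriv (deriv (fun r => PhiRay (t, r))) ρ -
        (deriv (fun s => deriv (fun r => PhiRay (s, r)) ρ) t) ^ 2 = 0 := by
  have hSconv : Convex ℝ (Set.Ici (0 : ℝ) ×ˢ (Set.univ : Set ℝ)) :=
    (convex_Ici 0).prod convex_univ
  constructor
  · -- Convexity
    refine ⟨hSconv, ?_⟩
    intro p hp q hq a b ha hb hab
    have hp1 : 0 ≤ p.1 := hp.1
    have hq1 : 0 ≤ q.1 := hq.1
    have hc1 : 0 ≤ (a • p + b • q).1 := by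
      simp only [Prod.fst_add, Prod.smul_fst, smul_eq_mul]
      exact add_nonneg (mul_nonneg ha hp1) (mul_nonneg hb hq1)
    rw [phiRay_eq _ hc1, phiRay_eq _ hp1, phiRay_eq _ hq1]
    have h1 := hcorner_combo (p := p) (q := q) ha hb
    have h2 : gfun (hcorner (a • p + b • q)) ≤ gfun (a * hcorner p + b * hcorner q) :=
      gfun_mono (Set.mem_Ici.2 (hcorner_nonneg _))
        (Set.mem_Ici.2 (add_nonneg (mul_nonneg ha (hcorner_nonneg p))
          (mul_nonneg hb (hcorner_nonneg q)))) h1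
    have h3 : gfun (a * hcorner p + b * hcorner q) ≤
        a * gfun (hcorner p) + b * gfun (hcorner q) := by
      simpa [smul_eq_mul] using
        gfun_convex.2 (Set.mem_univ (hcorner p)) (Set.mem_univ (hcorner q)) ha hb hab
    simp only [smul_eq_mul, Prod.snd_add, Prod.smul_snd]
    linarith
  · -- Degenerate Hessian
    intro t ρ ht hne1 hne2
    rcases lt_or_gt_of_ne hne1 with hA | hBC
    · -- Case A : ρ < -t
      set U : Set (ℝ × ℝ) := {p : ℝ × ℝ | p.2 + p.1 < 0} with hUdef
      have hU : IsOpen U := isOpen_lt (continuous_snd.add continuous_fst) continuous_const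
      have hmem : (t, ρ) ∈ U := by simp only [hUdef, Set.mem_setOf_eq]; linarith
      have hval : Set.EqOn PhiRay
          (fun p : ℝ × ℝ => -p.1 / 2 + Real.log (1 + Real.exp (p.2 + p.1))) U := by
        intro p hp
        simp only [hUdef, Set.mem_setOf_eq] at hp
        simp only [PhiRay, if_pos (show p.2 ≤ -p.1 by linarith)]
      have hev : PhiRay =ᶠ[nhds (t, ρ)]
          (fun p : ℝ × ℝ => -p.1 / 2 + Real.log (1 + Real.exp (p.2 + p.1))) :=
        Filter.eventuallyEq_of_mem (hU.mem_nhds hmem) hval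
      constructor
      · have hF : ContDiffAt ℝ 2
            (fun p : ℝ × ℝ => -p.1 / 2 + Real.log (1 + Real.exp (p.2 + p.1))) (t, ρ) := by
          have hinner : ContDiff ℝ 2 (fun p : ℝ × ℝ => 1 + Real.exp (p.2 + p.1)) :=
            contDiff_const.add ((Real.contDiff_exp.of_le le_top).comp
              (contDiff_snd.add contDiff_fst))
          exact ((contDiff_fst.neg.div_const 2).contDiffAt).add
            (hinner.contDiffAt.log (one_add_exp_ne _))
        exact hF.congr_of_eventuallyEq hev
      · set E : ℝ := Real.exp (ρ + t) / (1 + Real.exp (ρ + t)) ^ 2 with hE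
        have hA1 : deriv (deriv (fun s => PhiRay (s, ρ))) t = E * 1 * 1 := by
          have h1 : deriv (deriv (fun s => PhiRay (s, ρ))) t =
              deriv (deriv (fun s : ℝ => -s / 2 + Real.log (1 + Real.exp (ρ + s)))) t :=
            (slice_fst hU hmem hval).deriv.deriv_eq
          have e1 : deriv (fun s : ℝ => -s / 2 + Real.log (1 + Real.exp (ρ + s))) =
              fun s => -1 / 2 + sigm (ρ + s) * 1 :=
            funext fun s => (((hasDerivAt_id s).neg.div_const 2).add
              ((hasDerivAt_L (ρ + s)).comp s ((hasDerivAt_id s).const_add ρ))).deriv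
          rw [h1, e1]
          exact ((((hasDerivAt_sigm (ρ + t)).comp t
            ((hasDerivAt_id t).const_add ρ)).mul_const 1).const_add (-1 / 2)).deriv
        have hA2 : deriv (deriv (fun r => PhiRay (t, r))) ρ = E * 1 * 1 := by
          have h1 : deriv (deriv (fun r => PhiRay (t, r))) ρ =
              deriv (deriv (fun r : ℝ => -t / 2 + Real.log (1 + Real.exp (r + t)))) ρ :=
            (slice_snd hU hmem hval).deriv.deriv_eq
          have e1 : deriv (fun r : ℝ => -t / 2 + Real.log (1 + Real.exp (r + t))) =
              fun r => sigm (r + t) * 1 :=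
            funext fun r => (((hasDerivAt_L (r + t)).comp r
              ((hasDerivAt_id r).add_const t)).const_add (-t / 2)).deriv
          rw [h1, e1]
          exact (((hasDerivAt_sigm (ρ + t)).comp ρ
            ((hasDerivAt_id ρ).add_const t)).mul_const 1).deriv
        have hA3 : deriv (fun s => deriv (fun r => PhiRay (s, r)) ρ) t = E * 1 * 1 := by
          have hm : (fun s => deriv (fun r => PhiRay (s, r)) ρ) =ᶠ[nhds t]
              (fun s => deriv (fun r : ℝ => -s / 2 + Real.log (1 + Real.exp (r + s))) ρ) :=
            slice_mixed hU hmem hval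
          have hm2 : (fun s => deriv (fun r => PhiRay (s, r)) ρ) =ᶠ[nhds t]
              (fun s => sigm (ρ + s) * 1) := by
            refine hm.trans (Filter.Eventually.of_forall fun s => ?_)
            exact (((hasDerivAt_L (ρ + s)).comp ρ
              ((hasDerivAt_id ρ).add_const s)).const_add (-s / 2)).deriv
          rw [hm2.deriv_eq]
          exact (((hasDerivAt_sigm (ρ + t)).comp t
            ((hasDerivAt_id t).const_add ρ)).mul_const 1).deriv
        rw [hA1, hA2, hA3]; ring
    · rcases lt_or_gt_of_ne hne2 with hB | hC
      · -- Case B : -t < ρ < t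
        set U : Set (ℝ × ℝ) := {p : ℝ × ℝ | -p.1 < p.2 ∧ p.2 < p.1} with hUdef
        have hU : IsOpen U :=
          (isOpen_lt continuous_fst.neg continuous_snd).inter
            (isOpen_lt continuous_snd continuous_fst)
        have hmem : (t, ρ) ∈ U := by
          simp only [hUdef, Set.mem_setOf_eq]; exact ⟨hBC, hB⟩
        have hval : Set.EqOn PhiRay (fun p : ℝ × ℝ => p.2 / 2 + Real.log 2) U := by
          intro p hp
          simp only [hUdef, Set.mem_setOf_eq] at hp
          simp only [PhiRay, if_neg (not_le.2 hp.1), if_pos hp.2.le]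
        have hev : PhiRay =ᶠ[nhds (t, ρ)] (fun p : ℝ × ℝ => p.2 / 2 + Real.log 2) :=
          Filter.eventuallyEq_of_mem (hU.mem_nhds hmem) hval
        constructor
        · exact (((contDiff_snd.div_const 2).add contDiff_const).contDiffAt
            (n := 2)).congr_of_eventuallyEq hev
        · have hB1 : deriv (deriv (fun s => PhiRay (s, ρ))) t = 0 := by
            have h1 : deriv (deriv (fun s => PhiRay (s, ρ))) t =
                deriv (deriv (fun _ : ℝ => ρ / 2 + Real.log 2)) t :=
              (slice_fst hU hmem hval).deriv.deriv_eq
            have e1 : deriv (fun _ : ℝ => ρ / 2 + Real.log 2) = fun _ => (0 : ℝ) :=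
              funext fun s => deriv_const s _
            rw [h1, e1]
            exact deriv_const t 0
          have hB2 : deriv (deriv (fun r => PhiRay (t, r))) ρ = 0 := by
            have h1 : deriv (deriv (fun r => PhiRay (t, r))) ρ =
                deriv (deriv (fun r : ℝ => r / 2 + Real.log 2)) ρ :=
              (slice_snd hU hmem hval).deriv.deriv_eq
            have e1 : deriv (fun r : ℝ => r / 2 + Real.log 2) = fun _ => (1 : ℝ) / 2 :=
              funext fun r => (((hasDerivAt_id r).div_const 2).add_const _).deriv
            rw [h1, e1]
            exact deriv_const ρ _
          have hB3 : deriv (fun s => deriv (fun r => PhiRay (s, r)) ρ) t = 0 := by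
            have hm : (fun s => deriv (fun r => PhiRay (s, r)) ρ) =ᶠ[nhds t]
                (fun s => deriv (fun r : ℝ => r / 2 + Real.log 2) ρ) :=
              slice_mixed hU hmem hval
            have hm2 : (fun s => deriv (fun r => PhiRay (s, r)) ρ) =ᶠ[nhds t]
                (fun _ => (1 : ℝ) / 2) := by
              refine hm.trans (Filter.Eventually.of_forall fun s => ?_)
              exact (((hasDerivAt_id ρ).div_const 2).add_const _).deriv
            rw [hm2.deriv_eq]
            exact deriv_const t _
          rw [hB1, hB2, hB3]; ring
      · -- Case C : t < ρ
        set U : Set (ℝ × ℝ) := {p : ℝ × ℝ | p.1 < p.2 ∧ 0 < p.1 + p.2} with hUdef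
        have hU : IsOpen U :=
          (isOpen_lt continuous_fst continuous_snd).inter
            (isOpen_lt continuous_const (continuous_fst.add continuous_snd))
        have hmem : (t, ρ) ∈ U := by
          simp only [hUdef, Set.mem_setOf_eq]; exact ⟨hC, by linarith⟩
        have hval : Set.EqOn PhiRay
            (fun p : ℝ × ℝ => p.1 / 2 + Real.log (1 + Real.exp (p.2 - p.1))) U := by
          intro p hp
          simp only [hUdef, Set.mem_setOf_eq] at hp
          have h1 : ¬p.2 ≤ -p.1 := not_le.2 (by linarith [hp.1, hp.2])
          have h2 : ¬p.2 ≤ p.1 := not_le.2 hp.1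
          simp only [PhiRay, if_neg h1, if_neg h2]
        have hev : PhiRay =ᶠ[nhds (t, ρ)]
            (fun p : ℝ × ℝ => p.1 / 2 + Real.log (1 + Real.exp (p.2 - p.1))) :=
          Filter.eventuallyEq_of_mem (hU.mem_nhds hmem) hval
        constructor
        · have hF : ContDiffAt ℝ 2
              (fun p : ℝ × ℝ => p.1 / 2 + Real.log (1 + Real.exp (p.2 - p.1))) (t, ρ) := by
            have hinner : ContDiff ℝ 2 (fun p : ℝ × ℝ => 1 + Real.exp (p.2 - p.1)) :=
              contDiff_const.add ((Real.contDiff_exp.of_le le_top).comp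
                (contDiff_snd.sub contDiff_fst))
            exact ((contDiff_fst.div_const 2).contDiffAt).add
              (hinner.contDiffAt.log (one_add_exp_ne _))
          exact hF.congr_of_eventuallyEq hev
        · set E : ℝ := Real.exp (ρ - t) / (1 + Real.exp (ρ - t)) ^ 2 with hE
          have hC1 : deriv (deriv (fun s => PhiRay (s, ρ))) t = E * -1 * -1 := by
            have h1 : deriv (deriv (fun s => PhiRay (s, ρ))) t =
                deriv (deriv (fun s : ℝ => s / 2 + Real.log (1 + Real.exp (ρ - s)))) t :=
              (slice_fst hU hmem hval).deriv.deriv_eq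
            have e1 : deriv (fun s : ℝ => s / 2 + Real.log (1 + Real.exp (ρ - s))) =
                fun s => 1 / 2 + sigm (ρ - s) * -1 :=
              funext fun s => (((hasDerivAt_id s).div_const 2).add
                ((hasDerivAt_L (ρ - s)).comp s ((hasDerivAt_id s).const_sub ρ))).deriv
            rw [h1, e1]
            exact ((((hasDerivAt_sigm (ρ - t)).comp t
              ((hasDerivAt_id t).const_sub ρ)).mul_const (-1)).const_add (1 / 2)).deriv
          have hC2 : deriv (deriv (fun r => PhiRay (t, r))) ρ = E * 1 * 1 := by
            have h1 : deriv (deriv (fun r => PhiRay (t, r))) ρ =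
                deriv (deriv (fun r : ℝ => t / 2 + Real.log (1 + Real.exp (r - t)))) ρ :=
              (slice_snd hU hmem hval).deriv.deriv_eq
            have e1 : deriv (fun r : ℝ => t / 2 + Real.log (1 + Real.exp (r - t))) =
                fun r => sigm (r - t) * 1 :=
              funext fun r => (((hasDerivAt_L (r - t)).comp r
                ((hasDerivAt_id r).sub_const t)).const_add (t / 2)).deriv
            rw [h1, e1]
            exact (((hasDerivAt_sigm (ρ - t)).comp ρ
              ((hasDerivAt_id ρ).sub_const t)).mul_const 1).deriv
          have hC3 : deriv (fun s => deriv (fun r => PhiRay (s, r)) ρ) t = E * -1 * 1 := by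
            have hm : (fun s => deriv (fun r => PhiRay (s, r)) ρ) =ᶠ[nhds t]
                (fun s => deriv (fun r : ℝ => s / 2 + Real.log (1 + Real.exp (r - s))) ρ) :=
              slice_mixed hU hmem hval
            have hm2 : (fun s => deriv (fun r => PhiRay (s, r)) ρ) =ᶠ[nhds t]
                (fun s => sigm (ρ - s) * 1) := by
              refine hm.trans (Filter.Eventually.of_forall fun s => ?_)
              exact (((hasDerivAt_L (ρ - s)).comp ρ
                ((hasDerivAt_id ρ).sub_const s)).const_add (s / 2)).deriv
            rw [hm2.deriv_eq]
            exact (((hasDerivAt_sigm (ρ - t)).comp t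
              ((hasDerivAt_id t).const_sub ρ)).mul_const 1).deriv
          rw [hC1, hC2, hC3]; ring
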